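/- Let F ⊆ E be an extension of Δ-Σ-fields of characteristic zero (derivations δ_1,…,δ_s, automorphisms σ_1,…,σ_t, all commuting) such that: E = F(δ^α σ^β a_j | 1 ≤ j ≤ n, α ∈ ℤ_{≥0}^s, β ∈ ℤ^t) for some a_1,…,a_n ∈ E with s ≤ n; E is nondegenerate, i.e. δ_1,…,δ_s are linearly independent over E and σ^β|_E = id only for β = 0 ∈ ℤ^t; and det J(a_1,…,a_s) ≠ 0. Then for every m ∈ ℤ_{≥0} there exists a polynomial P ∈ F[x_1,…,x_n] of degree at most 2 such that, setting P_a := P(a_1,…,a_n), the element P_a is m-nonperiodic and det J(δ_1 P_a,…,δ_s P_a) ≠ 0. -/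

import Mathlib

/-- Iterated application of the derivations: `δ^α = δ_1^{α_1} ∘ ⋯ ∘ δ_s^{α_s}`. -/
def dIter {E : Type*} {s : ℕ} (δ : Fin s → (E → E)) (α : Fin s → ℕ) (x : E) : E :=
  (List.finRange s).foldl (fun y i => (δ i)^[α i] y) x

/-- Iterated application of the automorphisms with integer exponents:
`σ^β = σ_1^{β_1} ∘ ⋯ ∘ σ_t^{β_t}` for `β ∈ ℤ^t`. -/
def sIterZ {E : Type*} [Field E] {t : ℕ} (σ : Fin t → (E ≃+* E)) (β : Fin t → ℤ) (x : E) : E :=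
  (List.finRange t).foldl (fun y i => (σ i ^ β i) y) x

/-- Iterated application of the automorphisms with nonnegative exponents:
`σ^β = σ_1^{β_1} ∘ ⋯ ∘ σ_t^{β_t}` for `β ∈ ℤ_{≥0}^t`. -/
def sIterN {E : Type*} [Field E] {t : ℕ} (σ : Fin t → (E ≃+* E)) (β : Fin t → ℕ) (x : E) : E :=
  (List.finRange t).foldl (fun y i => (⇑(σ i))^[β i] y) x

/-- An element `x` is `m`-nonperiodic if `σ^α x = σ^β x` for `α, β ∈ ℤ_{≥0}^t`
with `|α| ≤ m` and `|β| ≤ m` implies `α = β`. -/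
def IsNonperiodic {E : Type*} [Field E] {t : ℕ} (σ : Fin t → (E ≃+* E)) (m : ℕ) (x : E) : Prop :=
  ∀ α β : Fin t → ℕ, (∑ i, α i) ≤ m → (∑ i, β i) ≤ m → sIterN σ α x = sIterN σ β x → α = β

namespace NPJhelp

variable {E : Type*} [Field E]

lemma ringAut_mul_apply (f g : RingAut E) (x : E) : (f * g) x = f (g x) := rfl

lemma ringAut_one_apply (x : E) : (1 : RingAut E) x = x := rfl

lemma ringAut_pow_apply (f : RingAut E) (k : ℕ) (x : E) : (f ^ k) x = (⇑f)^[k] x := by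
  induction k generalizing x with
  | zero => simp [ringAut_one_apply]
  | succ k ih =>
    rw [pow_succ', ringAut_mul_apply, Function.iterate_succ_apply, ih]
    exact (Function.iterate_succ_apply' (⇑f) k x).symm.trans (Function.iterate_succ_apply (⇑f) k x)

lemma ringAut_inv_apply (f : RingAut E) (x : E) : (f⁻¹ : RingAut E) x = f.symm x := rfl

/-- foldl application equals product application, for commuting automorphisms. -/
lemma foldl_eq_prod {ι : Type*} (g : ι → RingAut E)
    (hc : ∀ i j, Commute (g i) (g j)) (l : List ι) (x : E) :
    l.foldl (fun y i => g i y) x = ((l.map g).prod : RingAut E) x := by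
  induction l generalizing x with
  | nil => simp [ringAut_one_apply]
  | cons i l ih =>
    simp only [List.foldl_cons, List.map_cons, List.prod_cons, ih]
    have hcomm : Commute (g i) ((l.map g).prod) :=
      Commute.list_prod_right _ _ (by
        intro y hy
        obtain ⟨j, _, rfl⟩ := List.mem_map.1 hy
        exact hc i j)
    rw [show ((l.map g).prod) (g i x) = ((l.map g).prod * g i) x from rfl, ← hcomm.eq,
      ringAut_mul_apply]

lemma list_prod_map_mul {M : Type*} [Monoid M] {ι : Type*} (u v : ι → M)
    (hc : ∀ i j, Commute (v i) (u j)) (l : List ι) :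
    (l.map fun i => u i * v i).prod = (l.map u).prod * (l.map v).prod := by
  induction l with
  | nil => simp
  | cons i l ih =>
    simp only [List.map_cons, List.prod_cons, ih]
    have hcomm : Commute (v i) ((l.map u).prod) :=
      Commute.list_prod_right _ _ (by
        intro y hy
        obtain ⟨j, _, rfl⟩ := List.mem_map.1 hy
        exact hc i j)
    rw [mul_assoc, mul_assoc, ← mul_assoc (v i), hcomm.eq, mul_assoc]

end NPJhelp

namespace NPJhelp

variable {E : Type*} [Field E]

section Aut

variable {t : ℕ} (σ : Fin t → (E ≃+* E))

/-- The automorphism `σ^β` for `β ∈ ℤ^t`. -/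
def Aut (β : Fin t → ℤ) : RingAut E :=
  ((List.finRange t).map fun i => σ i ^ β i).prod

variable (hσσ : ∀ i j, ∀ x : E, σ i (σ j x) = σ j (σ i x))
include hσσ

lemma commute_sigma (i j : Fin t) : Commute (σ i) (σ j) := by
  refine RingEquiv.ext fun x => ?_
  rw [ringAut_mul_apply, ringAut_mul_apply, hσσ i j x]

lemma commute_zpow (i j : Fin t) (b c : ℤ) : Commute (σ i ^ b) (σ j ^ c) :=
  (commute_sigma σ hσσ i j).zpow_zpow b c

lemma sIterZ_eq_Aut (β : Fin t → ℤ) (x : E) : sIterZ σ β x = Aut σ β x :=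
  foldl_eq_prod _ (fun i j => commute_zpow σ hσσ i j _ _) _ _

lemma sIterN_eq_Aut (α : Fin t → ℕ) (x : E) :
    sIterN σ α x = Aut σ (fun i => (α i : ℤ)) x := by
  rw [← sIterZ_eq_Aut σ hσσ]
  unfold sIterN sIterZ
  congr 1
  funext y i
  rw [zpow_natCast, ringAut_pow_apply]

lemma Aut_add (β γ : Fin t → ℤ) : Aut σ (β + γ) = Aut σ β * Aut σ γ := by
  unfold Aut
  rw [show (fun i => σ i ^ (β + γ) i) = fun i => σ i ^ β i * σ i ^ γ i by
    funext i; rw [Pi.add_apply, zpow_add]]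
  exact list_prod_map_mul _ _ (fun i j => commute_zpow σ hσσ i j _ _) _

lemma Aut_zero : Aut σ (0 : Fin t → ℤ) = 1 := by
  unfold Aut
  rw [List.prod_eq_one]
  intro x hx
  obtain ⟨i, _, rfl⟩ := List.mem_map.1 hx
  simp

end Aut

section Der

variable (d : E → E) (hadd : ∀ x y : E, d (x + y) = d x + d y)
  (hleib : ∀ x y : E, d (x * y) = d x * y + x * d y)

/-- A derivation as an additive monoid hom. -/
def derHom : E →+ E := AddMonoidHom.mk' d hadd

lemma derHom_apply (x : E) : derHom d hadd x = d x := rfl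

include hadd hleib

lemma der_one : d 1 = 0 := by
  have h := hleib 1 1
  rw [mul_one, mul_one, one_mul] at h
  exact (left_eq_add.mp h)

lemma der_intCast (k : ℤ) : d (k : E) = 0 := by
  have : d ((k : ℤ) • (1 : E)) = (k : ℤ) • d 1 := map_zsmul (derHom d hadd) k 1
  rw [zsmul_eq_mul, zsmul_eq_mul, mul_one] at this
  rw [this, der_one d hadd hleib, mul_zero]

lemma der_inv_of (x : E) (hx : x ≠ 0) (hdx : d x = 0) : d x⁻¹ = 0 := by
  have h := hleib x x⁻¹
  rw [mul_inv_cancel₀ hx, der_one d hadd hleib, hdx, zero_mul, zero_add] at h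
  rcases mul_eq_zero.1 h.symm with h' | h'
  · exact absurd h' hx
  · exact h'

variable [CharZero E]

lemma der_ratCast (q : ℚ) : d (q : E) = 0 := by
  rw [Rat.cast_def, div_eq_mul_inv, hleib]
  have hden : ((q.den : E)) ≠ 0 := Nat.cast_ne_zero.2 q.den_nz
  have h1 : d ((q.num : E)) = 0 := der_intCast d hadd hleib q.num
  have h2 : d (((q.den : E))⁻¹) = 0 := by
    apply der_inv_of d hadd hleib _ hden
    have : ((q.den : E)) = ((q.den : ℤ) : E) := by push_cast; ring
    rw [this]
    exact der_intCast d hadd hleib _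
  rw [h1, h2, zero_mul, mul_zero, add_zero]

lemma der_ratCast_mul (q : ℚ) (x : E) : d ((q : E) * x) = (q : E) * d x := by
  rw [hleib, der_ratCast d hadd hleib, zero_mul, zero_add]

end Der

end NPJhelp

namespace NPJhelp

variable {E : Type*} [Field E]

section Comm

/-- Commutation of a map with an automorphism extends to its inverse. -/
lemma comm_symm (d : E → E) (f : RingAut E) (hf : ∀ x : E, d (f x) = f (d x)) :
    ∀ x : E, d (f.symm x) = f.symm (d x) := by
  intro x
  apply f.injective
  rw [← hf (f.symm x), RingEquiv.apply_symm_apply, RingEquiv.apply_symm_apply]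

lemma comm_pow (d : E → E) (f : RingAut E) (hf : ∀ x : E, d (f x) = f (d x)) (k : ℕ) :
    ∀ x : E, d ((f ^ k) x) = (f ^ k) (d x) := by
  induction k with
  | zero => intro x; simp [ringAut_one_apply]
  | succ k ih =>
    intro x
    rw [pow_succ, ringAut_mul_apply, ringAut_mul_apply, ih (f x), hf x]

lemma comm_zpow (d : E → E) (f : RingAut E) (hf : ∀ x : E, d (f x) = f (d x)) (k : ℤ) :
    ∀ x : E, d ((f ^ k) x) = (f ^ k) (d x) := by
  rcases k with k | k
  · rw [Int.ofNat_eq_coe, zpow_natCast]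
    exact comm_pow d f hf k
  · rw [zpow_negSucc]
    intro x
    rw [ringAut_inv_apply, ringAut_inv_apply]
    exact comm_symm d _ (comm_pow d f hf (k + 1)) x

lemma comm_list_prod (d : E → E) (l : List (RingAut E))
    (hl : ∀ f ∈ l, ∀ x : E, d (f x) = f (d x)) :
    ∀ x : E, d (l.prod x) = l.prod (d x) := by
  induction l with
  | nil => intro x; simp [ringAut_one_apply]
  | cons f l ih =>
    intro x
    rw [List.prod_cons, ringAut_mul_apply, ringAut_mul_apply,
      hl f List.mem_cons_self, ih (fun g hg => hl g (List.mem_cons_of_mem _ hg))]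

variable {t : ℕ} (σ : Fin t → (E ≃+* E))

lemma comm_Aut (d : E → E) (hd : ∀ j, ∀ x : E, d (σ j x) = σ j (d x)) (β : Fin t → ℤ) :
    ∀ x : E, d (Aut σ β x) = Aut σ β (d x) := by
  unfold Aut
  apply comm_list_prod
  intro f hf
  obtain ⟨i, _, rfl⟩ := List.mem_map.1 hf
  exact comm_zpow d (σ i) (hd i) (β i)

/-- `dIter` commutes with any map commuting with each `δ i`. -/
lemma dIter_comm {s : ℕ} (δ : Fin s → (E → E)) (μ : Fin s → ℕ) (f : E → E)
    (hf : ∀ i, ∀ x : E, f (δ i x) = δ i (f x)) (x : E) :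
    dIter δ μ (f x) = f (dIter δ μ x) := by
  unfold dIter
  induction (List.finRange s) generalizing x with
  | nil => simp
  | cons i l ih =>
    simp only [List.foldl_cons]
    rw [show (δ i)^[μ i] (f x) = f ((δ i)^[μ i] x) from ?_, ih]
    clear ih
    induction (μ i) generalizing x with
    | zero => simp
    | succ k ihk =>
      rw [Function.iterate_succ_apply, Function.iterate_succ_apply, ← hf i x, ihk]

end Comm

section RatPoint

open MvPolynomial

variable [CharZero E]

lemma exists_rat_eval_ne_zero_fin :
    ∀ (N : ℕ) (f : MvPolynomial (Fin N) E), f ≠ 0 →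
      ∃ q : Fin N → ℚ, eval (fun i => ((q i : ℚ) : E)) f ≠ 0 := by
  intro N
  induction N with
  | zero =>
    intro f hf
    refine ⟨fun _ => 0, ?_⟩
    have : f = C (coeff 0 f) := (MvPolynomial.eq_C_of_isEmpty f)
    rw [this, eval_C]
    intro h0
    apply hf
    rw [this, h0, map_zero]
  | succ N ih =>
    intro f hf
    set g : Polynomial (MvPolynomial (Fin N) E) := finSuccEquiv E N f with hg
    have hgne : g ≠ 0 := by
      simp only [hg]
      intro h
      exact hf ((map_eq_zero_iff _ (finSuccEquiv E N).injective).1 h)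
    have hlc : g.leadingCoeff ≠ 0 := Polynomial.leadingCoeff_ne_zero.2 hgne
    obtain ⟨q, hq⟩ := ih g.leadingCoeff hlc
    set h : Polynomial E := g.map (eval fun i => ((q i : ℚ) : E)) with hh
    have hhne : h ≠ 0 := by
      intro h0
      apply hq
      have := congrArg (fun p => Polynomial.coeff p g.natDegree) h0
      simpa [hh, Polynomial.coeff_map] using this
    -- the set of rational roots is finite
    have hfin : {y : ℚ | Polynomial.eval ((y : ℚ) : E) h = 0}.Finite := by
      have : {y : ℚ | Polynomial.eval ((y : ℚ) : E) h = 0}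
          = (fun y : ℚ => ((y : ℚ) : E)) ⁻¹' {x : E | Polynomial.IsRoot h x} := rfl
      rw [this]
      apply Set.Finite.preimage
      · exact fun x _ y _ hxy => by exact_mod_cast hxy
      · exact Polynomial.finite_setOf_isRoot hhne
    obtain ⟨y, hy⟩ := (hfin.infinite_compl).nonempty
    refine ⟨Fin.cons y q, ?_⟩
    have hc : (fun i => (((Fin.cons y q : Fin (N+1) → ℚ) i : ℚ) : E))
        = Fin.cons ((y : ℚ) : E) (fun i => ((q i : ℚ) : E)) := by
      funext i
      refine Fin.cases ?_ ?_ i <;> simp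
    rw [hc, eval_eq_eval_mv_eval']
    exact hy

lemma exists_rat_eval_ne_zero {ι : Type*} [Fintype ι] (f : MvPolynomial ι E) (hf : f ≠ 0) :
    ∃ q : ι → ℚ, eval (fun v => ((q v : ℚ) : E)) f ≠ 0 := by
  classical
  obtain ⟨e⟩ := Fintype.truncEquivFin ι
  have hr : rename e f ≠ 0 := fun h0 =>
    hf ((map_eq_zero_iff _ (rename_injective e e.injective)).1 h0)
  obtain ⟨q, hq⟩ := exists_rat_eval_ne_zero_fin _ _ hr
  refine ⟨q ∘ e, ?_⟩
  rw [eval_rename] at hq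
  exact hq
end RatPoint

section SumIte

lemma sum_ite_lt {M : Type*} [AddCommMonoid M] {s n : ℕ} (hsn : s ≤ n) (f : Fin n → M) :
    ∑ j : Fin n, (if (j : ℕ) < s then f j else 0) = ∑ k : Fin s, f (Fin.castLE hsn k) := by
  classical
  rw [← Finset.sum_filter]
  rw [show Finset.univ.filter (fun j : Fin n => (j : ℕ) < s)
      = Finset.univ.map (Fin.castLEOrderEmb hsn).toEmbedding from ?_, Finset.sum_map]
  · apply Finset.sum_congr rfl
    intro k _
    congr 1
  · ext j
    simp only [Finset.mem_filter, Finset.mem_univ, true_and, Finset.mem_map]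
    constructor
    · intro hj
      refine ⟨⟨(j : ℕ), hj⟩, ?_⟩
      exact Fin.ext rfl
    · rintro ⟨k, _, rfl⟩
      exact k.isLt
end SumIte

end NPJhelp

namespace NPJhelp

open MvPolynomial

variable {E : Type*} [Field E]

section Main

variable {s t n m : ℕ}

/-- Index type for the auxiliary polynomial variables. -/
abbrev Idx (t m n s : ℕ) : Type :=
  ((Fin t → Fin (m + 1)) × (Fin t → Fin (m + 1))) ⊕ (Fin n ⊕ Fin s)

/-- first exponent tuple of a pair, as integers -/
def z1 (p : (Fin t → Fin (m + 1)) × (Fin t → Fin (m + 1))) : Fin t → ℤ :=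
  fun i => ((p.1 i : ℕ) : ℤ)

/-- second exponent tuple of a pair, as integers -/
def z2 (p : (Fin t → Fin (m + 1)) × (Fin t → Fin (m + 1))) : Fin t → ℤ :=
  fun i => ((p.2 i : ℕ) : ℤ)

/-- the elements of `E` associated to each variable -/
def gen (cF : ((Fin t → Fin (m + 1)) × (Fin t → Fin (m + 1))) → E) (a : Fin n → E)
    (hsn : s ≤ n) : Idx t m n s → E :=
  Sum.elim cF (Sum.elim a fun k => a (Fin.castLE hsn k) * a (Fin.castLE hsn k))

/-- linear polynomial with prescribed coefficients -/
noncomputable def linPoly (e : Idx t m n s → E) : MvPolynomial (Idx t m n s) E :=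
  ∑ v : Idx t m n s, X v * C (e v)

lemma eval_linPoly (w e : Idx t m n s → E) :
    eval w (linPoly e) = ∑ v : Idx t m n s, w v * e v := by
  unfold linPoly
  rw [map_sum]
  exact Finset.sum_congr rfl fun v _ => by rw [map_mul, eval_X, eval_C]

lemma linPoly_ne_zero (e : Idx t m n s → E) (v₀ : Idx t m n s) (h : e v₀ ≠ 0) :
    linPoly e ≠ 0 := by
  intro h0
  apply h
  have h1 := congrArg (eval (Pi.single v₀ (1 : E))) h0
  rw [eval_linPoly, map_zero] at h1
  rw [Finset.sum_eq_single v₀ (fun v _ hv => by rw [Pi.single_eq_of_ne hv, zero_mul])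
    (fun hv => absurd (Finset.mem_univ v₀) hv), Pi.single_eq_same, one_mul] at h1
  exact h1

end Main

end NPJhelp

open MvPolynomial NPJhelp Matrix in
/-- Let `F ⊆ E` be a nondegenerate extension of Δ-Σ-fields of characteristic zero with
`E = F⟨a_1, …, a_n⟩`, `s ≤ n`, and `det J(a_1, …, a_s) ≠ 0`.  Then for every `m` there is
a polynomial `P ∈ F[x_1, …, x_n]` of degree at most 2 such that `P_a := P(a_1, …, a_n)`
is `m`-nonperiodic and `det J(δ_1 P_a, …, δ_s P_a) ≠ 0`. -/
theorem exists_nonperiodic_nonzero_jacobian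
    {E : Type*} [Field E] [CharZero E] (F : Subfield E)
    {s t n : ℕ} (hsn : s ≤ n)
    (δ : Fin s → (E → E)) (σ : Fin t → (E ≃+* E))
    (hadd : ∀ i, ∀ x y : E, δ i (x + y) = δ i x + δ i y)
    (hleib : ∀ i, ∀ x y : E, δ i (x * y) = δ i x * y + x * δ i y)
    (hδδ : ∀ i j, ∀ x : E, δ i (δ j x) = δ j (δ i x))
    (hδσ : ∀ i j, ∀ x : E, δ i (σ j x) = σ j (δ i x))
    (hσσ : ∀ i j, ∀ x : E, σ i (σ j x) = σ j (σ i x))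
    (hFδ : ∀ i, ∀ x ∈ F, δ i x ∈ F)
    (hFσ : ∀ j, ∀ x ∈ F, σ j x ∈ F)
    (hFσinv : ∀ j, ∀ x ∈ F, (σ j).symm x ∈ F)
    (a : Fin n → E)
    (hgen : Subfield.closure ((F : Set E) ∪
      Set.range (fun p : (Fin s → ℕ) × (Fin t → ℤ) × Fin n =>
        dIter δ p.1 (sIterZ σ p.2.1 (a p.2.2)))) = ⊤)
    (hδind : ∀ b : Fin s → E, (∀ x : E, ∑ i, b i * δ i x = 0) → ∀ i, b i = 0)
    (hσind : ∀ β : Fin t → ℤ, (∀ x : E, sIterZ σ β x = x) → β = 0)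
    (hJac : (Matrix.of fun i j : Fin s => δ j (a (Fin.castLE hsn i))).det ≠ 0)
    (m : ℕ) :
    ∃ P : MvPolynomial (Fin n) E,
      (∀ d : Fin n →₀ ℕ, MvPolynomial.coeff d P ∈ F) ∧
      P.totalDegree ≤ 2 ∧
      IsNonperiodic σ m (MvPolynomial.eval a P) ∧
      (Matrix.of fun i j : Fin s =>
        δ j (δ i (MvPolynomial.eval a P))).det ≠ 0 := by
  classical
  -- derivation linearity over ℚ
  have hδrat : ∀ (i : Fin s) (r : ℚ) (x : E), δ i ((r : E) * x) = (r : E) * δ i x :=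
    fun i => der_ratCast_mul (δ i) (hadd i) (hleib i)
  -- basic facts about the automorphism products
  have hAZ : ∀ (β : Fin t → ℤ) (x : E), sIterZ σ β x = Aut σ β x := sIterZ_eq_Aut σ hσσ
  have hAN : ∀ (α : Fin t → ℕ) (x : E), sIterN σ α x = Aut σ (fun i => (α i : ℤ)) x :=
    sIterN_eq_Aut σ hσσ
  have hAadd := Aut_add σ hσσ
  -- if two automorphism products agree on F and the generators, their exponents agree
  have hagree : ∀ αz βz : Fin t → ℤ, (∀ c ∈ F, Aut σ αz c = Aut σ βz c) →
      (∀ j, Aut σ αz (a j) = Aut σ βz (a j)) → αz = βz := by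
    intro αz βz hF ha
    have hcd : ∀ (γ : Fin t → ℤ) (μ : Fin s → ℕ) (y : E),
        Aut σ γ (dIter δ μ y) = dIter δ μ (Aut σ γ y) := by
      intro γ μ y
      exact (dIter_comm δ μ (⇑(Aut σ γ))
        (fun i x => (comm_Aut σ (δ i) (fun j x => hδσ i j x) γ x).symm) y).symm
    have hcs : ∀ (γ ν : Fin t → ℤ) (y : E),
        Aut σ γ (sIterZ σ ν y) = sIterZ σ ν (Aut σ γ y) := by
      intro γ ν y
      rw [hAZ, hAZ]
      have hmul : Aut σ γ * Aut σ ν = Aut σ ν * Aut σ γ := by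
        rw [← hAadd, ← hAadd, add_comm]
      calc Aut σ γ (Aut σ ν y) = (Aut σ γ * Aut σ ν) y := rfl
        _ = (Aut σ ν * Aut σ γ) y := by rw [hmul]
        _ = Aut σ ν (Aut σ γ y) := rfl
    have hhom : ((Aut σ αz : E ≃+* E) : E →+* E) = ((Aut σ βz : E ≃+* E) : E →+* E) := by
      apply RingHom.eq_of_eqOn_of_field_closure_eq_top hgen
      rintro x (hx | ⟨p, rfl⟩)
      · exact hF x hx
      · show Aut σ αz (dIter δ p.1 (sIterZ σ p.2.1 (a p.2.2)))
          = Aut σ βz (dIter δ p.1 (sIterZ σ p.2.1 (a p.2.2)))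
        rw [hcd, hcd, hcs, hcs, ha p.2.2]
    have hfun : ∀ x : E, Aut σ αz x = Aut σ βz x := fun x => RingHom.congr_fun hhom x
    have hone : ∀ x : E, sIterZ σ (αz - βz) x = x := by
      intro x
      rw [hAZ]
      have h2 : Aut σ βz * Aut σ (αz - βz) = Aut σ βz * 1 := by
        rw [mul_one, ← hAadd, show βz + (αz - βz) = αz by ring]
        exact RingEquiv.ext fun y => hfun y
      rw [mul_left_cancel h2]
      rfl
    exact sub_eq_zero.1 (hσind _ hone)
  -- choice of separating constants from F
  have hsep : ∀ p : (Fin t → Fin (m + 1)) × (Fin t → Fin (m + 1)),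
      ∃ c, c ∈ F ∧ (z1 p ≠ z2 p →
        (∀ j, Aut σ (z1 p) (a j) = Aut σ (z2 p) (a j)) →
        Aut σ (z1 p) c ≠ Aut σ (z2 p) c) := by
    intro p
    by_cases hc : ∃ c, c ∈ F ∧ Aut σ (z1 p) c ≠ Aut σ (z2 p) c
    · obtain ⟨c, hcm, hne⟩ := hc
      exact ⟨c, hcm, fun _ _ => hne⟩
    · push_neg at hc
      exact ⟨0, F.zero_mem, fun hne hag => absurd (hagree _ _ hc hag) hne⟩
  set cF : ((Fin t → Fin (m + 1)) × (Fin t → Fin (m + 1))) → E :=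
    fun p => (hsep p).choose with hcF
  have hcFmem : ∀ p, cF p ∈ F := fun p => (hsep p).choose_spec.1
  have hcFsep : ∀ p, z1 p ≠ z2 p → (∀ j, Aut σ (z1 p) (a j) = Aut σ (z2 p) (a j)) →
      Aut σ (z1 p) (cF p) ≠ Aut σ (z2 p) (cF p) := fun p => (hsep p).choose_spec.2
  set G : Idx t m n s → E := gen cF a hsn with hG
  set S : Finset ((Fin t → Fin (m + 1)) × (Fin t → Fin (m + 1))) :=
    Finset.univ.filter (fun p => p.1 ≠ p.2) with hS
  set Φp : ((Fin t → Fin (m + 1)) × (Fin t → Fin (m + 1))) → MvPolynomial (Idx t m n s) E :=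
    fun p => linPoly (fun v => Aut σ (z1 p) (G v) - Aut σ (z2 p) (G v)) with hΦp
  set Mp : Matrix (Fin s) (Fin s) (MvPolynomial (Idx t m n s) E) :=
    Matrix.of (fun i j => linPoly (fun v => δ j (δ i (G v)))) with hMp
  -- each linear separation polynomial is nonzero
  have hΦpne : ∀ p ∈ S, Φp p ≠ 0 := by
    intro p hp
    have hp12 : p.1 ≠ p.2 := (Finset.mem_filter.1 hp).2
    have hz : z1 p ≠ z2 p := by
      intro h
      apply hp12
      funext i
      have h1 := congrFun h i
      simp only [z1, z2] at h1
      exact Fin.ext (by exact_mod_cast h1)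
    by_cases hag : ∀ j, Aut σ (z1 p) (a j) = Aut σ (z2 p) (a j)
    · exact linPoly_ne_zero _ (Sum.inl p) (sub_ne_zero.2 (hcFsep p hz hag))
    · push_neg at hag
      obtain ⟨j, hj⟩ := hag
      exact linPoly_ne_zero _ (Sum.inr (Sum.inl j)) (sub_ne_zero.2 hj)
  -- the determinant polynomial is nonzero
  have hMdetne : Mp.det ≠ 0 := by
    intro h0
    set w₀ : Idx t m n s → E := Sum.elim (fun _ => (0 : E))
      (Sum.elim (fun j => if (j : ℕ) < s then (-2) * a j else 0) (fun _ => (1 : E))) with hw₀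
    have h1 : (eval w₀) Mp.det = 0 := by rw [h0, map_zero]
    rw [RingHom.map_det] at h1
    have h2 : (eval w₀).mapMatrix Mp = Matrix.of (fun i j => ∑ k : Fin s,
        (2 : E) * (δ j (a (Fin.castLE hsn k)) * δ i (a (Fin.castLE hsn k)))) := by
      ext i j
      show eval w₀ (linPoly fun v => δ j (δ i (G v))) = _
      rw [eval_linPoly, Fintype.sum_sum_type, Fintype.sum_sum_type]
      simp only [hw₀, hG, gen, Sum.elim_inl, Sum.elim_inr, zero_mul,
        Finset.sum_const_zero, zero_add, one_mul, ite_mul, Matrix.of_apply]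
      rw [sum_ite_lt hsn (fun j' => (-2 : E) * a j' * δ j (δ i (a j')))]
      rw [← Finset.sum_add_distrib]
      apply Finset.sum_congr rfl
      intro k _
      show _ = (2 : E) * _
      rw [hleib i (a (Fin.castLE hsn k)) (a (Fin.castLE hsn k)), hadd j, hleib j, hleib j]
      ring
    have h3 : Matrix.of (fun i j => ∑ k : Fin s,
        (2 : E) * (δ j (a (Fin.castLE hsn k)) * δ i (a (Fin.castLE hsn k))))
        = (2 : E) • ((Matrix.of fun i j : Fin s => δ j (a (Fin.castLE hsn i)))ᵀ
          * (Matrix.of fun i j : Fin s => δ j (a (Fin.castLE hsn i)))) := by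
      ext i j
      simp only [Matrix.smul_apply, Matrix.mul_apply, Matrix.transpose_apply, Matrix.of_apply,
        smul_eq_mul, Finset.mul_sum]
      apply Finset.sum_congr rfl
      intro k _
      ring
    rw [h2, h3, Matrix.det_smul, Matrix.det_mul, Matrix.det_transpose] at h1
    rcases mul_eq_zero.1 h1 with h | h
    · exact pow_ne_zero _ (two_ne_zero) h
    · rcases mul_eq_zero.1 h with h' | h' <;> exact hJac h'
  -- pick a rational point where everything is nonzero
  have hΦne : Mp.det * ∏ p ∈ S, Φp p ≠ 0 :=
    mul_ne_zero hMdetne (Finset.prod_ne_zero_iff.2 hΦpne)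
  obtain ⟨q, hq⟩ := exists_rat_eval_ne_zero _ hΦne
  set w : Idx t m n s → E := fun v => ((q v : ℚ) : E) with hw
  rw [_root_.map_mul, map_prod] at hq
  have hdet : (eval w) Mp.det ≠ 0 := left_ne_zero_of_mul hq
  have hPev : ∀ p ∈ S, (eval w) (Φp p) ≠ 0 := by
    intro p hp h0
    exact right_ne_zero_of_mul hq (Finset.prod_eq_zero hp h0)
  -- the polynomial P
  set dvec : Idx t m n s → (Fin n →₀ ℕ) := Sum.elim (fun _ => 0)
    (Sum.elim (fun j => Finsupp.single j 1) (fun k => Finsupp.single (Fin.castLE hsn k) 2))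
    with hdvec
  set cval : Idx t m n s → E := Sum.elim cF (fun _ => 1) with hcval
  set P : MvPolynomial (Fin n) E := ∑ v : Idx t m n s, monomial (dvec v) (w v * cval v)
    with hPdef
  have hPa : eval a P = ∑ v : Idx t m n s, w v * G v := by
    rw [hPdef, map_sum]
    apply Finset.sum_congr rfl
    intro v _
    rw [eval_monomial]
    rcases v with p | (j | k)
    · simp [hdvec, hG, gen, hcval]
    · simp [hdvec, hG, gen, hcval, Finsupp.prod_single_index]
    · simp [hdvec, hG, gen, hcval, Finsupp.prod_single_index]
      try exact Or.inl (sq _)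
  have hδsum : ∀ (i' : Fin s) (g : Idx t m n s → E),
      δ i' (∑ v : Idx t m n s, w v * g v) = ∑ v : Idx t m n s, w v * δ i' (g v) := by
    intro i' g
    show derHom (δ i') (hadd i') (∑ v : Idx t m n s, w v * g v) = _
    rw [map_sum]
    exact Finset.sum_congr rfl fun v _ => by
      show δ i' (w v * g v) = _
      rw [hw]
      exact hδrat i' (q v) (g v)
  refine ⟨P, ?_, ?_, ?_, ?_⟩
  · -- coefficients in F
    intro d
    rw [hPdef, coeff_sum]
    apply sum_mem
    intro v _
    rw [coeff_monomial]
    split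
    · apply F.mul_mem
      · exact SubfieldClass.ratCast_mem F (q v)
      · rcases v with p | v
        · exact hcFmem p
        · exact F.one_mem
    · exact F.zero_mem
  · -- total degree
    rw [hPdef]
    apply totalDegree_finsetSum_le
    intro v _
    refine le_trans (totalDegree_monomial_le _ _) ?_
    rcases v with p | (j | k)
    · simp [hdvec]
    · simp [hdvec, Finsupp.sum_single_index]
    · simp [hdvec, Finsupp.sum_single_index]
  · -- nonperiodicity
    intro α β hα hβ heq
    have hbα : ∀ i, α i ≤ m := fun i =>
      le_trans (Finset.single_le_sum (fun _ _ => Nat.zero_le _) (Finset.mem_univ i)) hα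
    have hbβ : ∀ i, β i ≤ m := fun i =>
      le_trans (Finset.single_le_sum (fun _ _ => Nat.zero_le _) (Finset.mem_univ i)) hβ
    by_contra hne
    set p : (Fin t → Fin (m + 1)) × (Fin t → Fin (m + 1)) :=
      (fun i => ⟨α i, Nat.lt_succ_of_le (hbα i)⟩,
       fun i => ⟨β i, Nat.lt_succ_of_le (hbβ i)⟩) with hp
    have hp12 : p.1 ≠ p.2 := by
      intro h
      apply hne
      funext i
      exact congrArg Fin.val (congrFun h i)
    have hpS : p ∈ S := by
      rw [hS]
      exact Finset.mem_filter.2 ⟨Finset.mem_univ _, hp12⟩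
    apply hPev p hpS
    have hAP : ∀ γ : Fin t → ℤ, Aut σ γ (∑ v : Idx t m n s, w v * G v)
        = ∑ v : Idx t m n s, w v * Aut σ γ (G v) := by
      intro γ
      rw [map_sum]
      apply Finset.sum_congr rfl
      intro v _
      rw [_root_.map_mul]
      congr 1
      exact map_ratCast (Aut σ γ) (q v)
    show eval w (linPoly fun v => Aut σ (z1 p) (G v) - Aut σ (z2 p) (G v)) = 0
    rw [eval_linPoly]
    have hz1 : z1 p = fun i => (α i : ℤ) := rfl
    have hz2 : z2 p = fun i => (β i : ℤ) := rfl
    calc (∑ v : Idx t m n s, w v * (Aut σ (z1 p) (G v) - Aut σ (z2 p) (G v)))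
        = ∑ v : Idx t m n s,
            (w v * Aut σ (z1 p) (G v) - w v * Aut σ (z2 p) (G v)) := by
          exact Finset.sum_congr rfl fun v _ => mul_sub _ _ _
      _ = (∑ v : Idx t m n s, w v * Aut σ (z1 p) (G v))
          - ∑ v : Idx t m n s, w v * Aut σ (z2 p) (G v) := Finset.sum_sub_distrib _ _
      _ = Aut σ (z1 p) (∑ v : Idx t m n s, w v * G v)
          - Aut σ (z2 p) (∑ v : Idx t m n s, w v * G v) := by rw [hAP, hAP]
      _ = 0 := by
          rw [sub_eq_zero, hz1, hz2, ← hPa, ← hAN α, ← hAN β]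
          exact heq
  · -- nonvanishing Jacobian determinant
    intro h0
    apply hdet
    rw [RingHom.map_det]
    have hmm : (eval w).mapMatrix Mp = Matrix.of (fun i j : Fin s => δ j (δ i (eval a P))) := by
      ext i j
      show eval w (linPoly fun v => δ j (δ i (G v))) = δ j (δ i (eval a P))
      rw [eval_linPoly, hPa, hδsum i G, hδsum j (fun v => δ i (G v))]
    rw [hmm]
    exact h0
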